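/- Let H = ([n],[m],E) be a bipartite graph with connected base graph and let p ∈ ∂(H) be a boundary vector. If A_1,...,A_n is a set of cylinders in I^m conforming with H such that μ(A_i) ≤ p_i for all i and μ(∪_i A_i) = 1, then μ(A_i) = p_i for all i. -/

import Mathlib

open MeasureTheory

/-- The uniform probability measure on the unit cube `[0,1]^m`, viewed as a measure
on `Fin m → ℝ`. -/
noncomputable def cubeMeasure (m : ℕ) : Measure (Fin m → ℝ) :=
  Measure.pi fun _ => volume.restrict (Set.Icc 0 1)

/-- `A` is a cylinder depending only on the coordinates in `S`. -/
def DependsOnlyOn {m : ℕ} (A : Set (Fin m → ℝ)) (S : Set (Fin m)) : Prop :=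
  ∀ x y : Fin m → ℝ, (∀ j ∈ S, x j = y j) → (x ∈ A ↔ y ∈ A)

/-- A cylinder set conforms with the bigraph given by edge relation `E`. -/
def Conforms {n m : ℕ} (E : Fin n → Fin m → Prop) (A : Fin n → Set (Fin m → ℝ)) : Prop :=
  (∀ i, MeasurableSet (A i)) ∧ ∀ i, DependsOnlyOn (A i) {j | E i j}

/-- The base graph of the bigraph. -/
def baseGraph {n m : ℕ} (E : Fin n → Fin m → Prop) : SimpleGraph (Fin n) where
  Adj i j := i ≠ j ∧ ∃ k, E i k ∧ E j k
  symm := ⟨by rintro i j ⟨h, k, h1, h2⟩; exact ⟨h.symm, k, h2, h1⟩⟩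
  loopless := ⟨by rintro i ⟨h, -⟩; exact h rfl⟩

/-- `p` is a boundary vector of the bigraph: for every `ε ∈ (0,1)`, every conforming
cylinder set with measure vector `(1-ε)p` has union of measure `< 1`, and some conforming
cylinder set with measure vector `min 1 ((1+ε)p)` has union of full measure. -/
def OnBoundary {n m : ℕ} (E : Fin n → Fin m → Prop) (p : Fin n → ℝ) : Prop :=
  ∀ ε ∈ Set.Ioo (0:ℝ) 1,
    (∀ A : Fin n → Set (Fin m → ℝ), Conforms E A →
      (∀ i, cubeMeasure m (A i) = ENNReal.ofReal ((1 - ε) * p i)) →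
      cubeMeasure m (⋃ i, A i) < 1) ∧
    (∃ A : Fin n → Set (Fin m → ℝ), Conforms E A ∧
      (∀ i, cubeMeasure m (A i) = ENNReal.ofReal (min 1 ((1 + ε) * p i))) ∧
      cubeMeasure m (⋃ i, A i) = 1)

open scoped ENNReal

instance cubeProb (m : ℕ) : IsProbabilityMeasure (cubeMeasure m) := by
  haveI : IsProbabilityMeasure (volume.restrict (Set.Icc (0:ℝ) 1)) :=
    ⟨by simp [Real.volume_Icc]⟩
  unfold cubeMeasure; infer_instance

theorem cube_slab (m : ℕ) (j : Fin m) (S : Set ℝ) (hS : MeasurableSet S) :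
    cubeMeasure m {x | x j ∈ S} = volume (S ∩ Set.Icc 0 1) := by
  have h1 : {x : Fin m → ℝ | x j ∈ S}
      = Set.pi Set.univ (Function.update (fun _ => Set.univ) j S) := by
    ext x
    simp only [Set.mem_univ_pi, Set.mem_setOf_eq]
    constructor
    · intro h i
      rcases eq_or_ne i j with rfl | hij
      · simpa using h
      · simp [Function.update_of_ne hij]
    · intro h; simpa using h j
  rw [h1, cubeMeasure, MeasureTheory.Measure.pi_pi]
  rw [Finset.prod_eq_single j]
  · rw [Function.update_self, MeasureTheory.Measure.restrict_apply hS]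
  · intro b _ hb
    simp [Function.update_of_ne hb, Real.volume_Icc]
  · intro h; exact absurd (Finset.mem_univ j) h

theorem dep_union {m : ℕ} {A B : Set (Fin m → ℝ)} {S : Set (Fin m)}
    (hA : DependsOnlyOn A S) (hB : DependsOnlyOn B S) : DependsOnlyOn (A ∪ B) S := by
  intro x y h
  simp only [Set.mem_union]
  rw [hA x y h, hB x y h]

theorem dep_diff {m : ℕ} {A B : Set (Fin m → ℝ)} {S : Set (Fin m)}
    (hA : DependsOnlyOn A S) (hB : DependsOnlyOn B S) : DependsOnlyOn (A \ B) S := by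
  intro x y h
  simp only [Set.mem_diff]
  rw [hA x y h, hB x y h]

theorem dep_slab {m : ℕ} (j : Fin m) (P : ℝ → Prop) {S : Set (Fin m)} (hj : j ∈ S) :
    DependsOnlyOn {x | P (x j)} S := by
  intro x y h
  simp only [Set.mem_setOf_eq, h j hj]

theorem tauLower (s ℓ : ℝ) (h0 : 0 < ℓ) (h1 : ℓ ≤ 1) :
    ENNReal.ofReal ℓ ≤ volume ({τ : ℝ | Int.fract (s - τ) < ℓ} ∩ Set.Icc 0 1) := by
  set u := Int.fract s with hu
  have hu0 : 0 ≤ u := Int.fract_nonneg s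
  have hu1 : u < 1 := Int.fract_lt_one s
  have key : ∀ τ : ℝ, Int.fract (s - τ) = Int.fract (u - τ) := by
    intro τ
    have h2 : s - τ = (⌊s⌋ : ℝ) + (u - τ) := by
      have := Int.floor_add_fract s; rw [hu]; linarith
    rw [h2, Int.fract_intCast_add]
  rcases le_or_gt ℓ u with hc | hc
  · have hsub : Set.Ioc (u - ℓ) u ⊆ {τ : ℝ | Int.fract (s - τ) < ℓ} ∩ Set.Icc 0 1 := by
      rintro τ ⟨hτ1, hτ2⟩
      refine ⟨?_, by constructor <;> linarith⟩
      show Int.fract (s - τ) < ℓ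
      rw [key, Int.fract_eq_self.mpr ⟨by linarith, by linarith⟩]
      linarith
    calc ENNReal.ofReal ℓ = volume (Set.Ioc (u - ℓ) u) := by
          rw [Real.volume_Ioc]; congr 1; ring
      _ ≤ _ := measure_mono hsub
  · have hsub1 : Set.Ioc 0 u ⊆ {τ : ℝ | Int.fract (s - τ) < ℓ} ∩ Set.Icc 0 1 := by
      rintro τ ⟨hτ1, hτ2⟩
      refine ⟨?_, by constructor <;> linarith⟩
      show Int.fract (s - τ) < ℓ
      rw [key, Int.fract_eq_self.mpr ⟨by linarith, by linarith⟩]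
      linarith
    have hsub2 : Set.Ioc (u + 1 - ℓ) 1 ⊆ {τ : ℝ | Int.fract (s - τ) < ℓ} ∩ Set.Icc 0 1 := by
      rintro τ ⟨hτ1, hτ2⟩
      refine ⟨?_, by constructor <;> linarith⟩
      show Int.fract (s - τ) < ℓ
      have h2 : u - τ = (u - τ + 1) - ((1:ℤ):ℝ) := by push_cast; ring
      rw [key, h2, Int.fract_sub_intCast, Int.fract_eq_self.mpr ⟨by linarith, by linarith⟩]
      linarith
    have hdisj : Disjoint (Set.Ioc (0:ℝ) u) (Set.Ioc (u + 1 - ℓ) 1) := by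
      rw [Set.disjoint_left]
      rintro τ ⟨_, h2⟩ ⟨h3, _⟩
      linarith
    calc ENNReal.ofReal ℓ
        = volume (Set.Ioc (0:ℝ) u) + volume (Set.Ioc (u + 1 - ℓ) 1) := by
          rw [Real.volume_Ioc, Real.volume_Ioc,
            ← ENNReal.ofReal_add (by linarith) (by linarith)]
          congr 1; ring
      _ = volume (Set.Ioc (0:ℝ) u ∪ Set.Ioc (u + 1 - ℓ) 1) :=
          (measure_union hdisj measurableSet_Ioc).symm
      _ ≤ _ := measure_mono (Set.union_subset hsub1 hsub2)

theorem sUpper (τ ℓ : ℝ) (hτ0 : 0 ≤ τ) (hτ1 : τ < 1) :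
    volume ({s : ℝ | Int.fract (s - τ) < ℓ} ∩ Set.Icc 0 1)
      ≤ ENNReal.ofReal ℓ + ENNReal.ofReal ℓ := by
  have hsub : {s : ℝ | Int.fract (s - τ) < ℓ} ∩ Set.Icc 0 1 ⊆
      (Set.Ico τ (τ + ℓ) ∪ Set.Ico (τ - 1) (τ - 1 + ℓ)) ∪ {τ + 1} := by
    rintro s ⟨hs, hs0, hs1⟩
    simp only [Set.mem_setOf_eq] at hs
    rcases lt_or_ge (s - τ) 0 with hv | hv
    · have hfr : Int.fract (s - τ) = s - τ + 1 := by
        have h2 : s - τ = (s - τ + 1) - ((1:ℤ):ℝ) := by push_cast; ring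
        conv_lhs => rw [h2]
        rw [Int.fract_sub_intCast, Int.fract_eq_self.mpr ⟨by linarith, by linarith⟩]
      rw [hfr] at hs
      exact Or.inl (Or.inr ⟨by linarith, by linarith⟩)
    · rcases lt_or_ge (s - τ) 1 with hv1 | hv1
      · have hfr : Int.fract (s - τ) = s - τ := Int.fract_eq_self.mpr ⟨hv, hv1⟩
        rw [hfr] at hs
        exact Or.inl (Or.inl ⟨by linarith, by linarith⟩)
      · have : s - τ = 1 := by linarith
        right; simp [show s = τ + 1 by linarith]
  calc volume ({s : ℝ | Int.fract (s - τ) < ℓ} ∩ Set.Icc 0 1)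
      ≤ volume ((Set.Ico τ (τ + ℓ) ∪ Set.Ico (τ - 1) (τ - 1 + ℓ)) ∪ {τ + 1}) :=
        measure_mono hsub
    _ ≤ volume (Set.Ico τ (τ + ℓ) ∪ Set.Ico (τ - 1) (τ - 1 + ℓ)) + volume ({τ + 1} : Set ℝ) :=
        measure_union_le _ _
    _ ≤ (volume (Set.Ico τ (τ + ℓ)) + volume (Set.Ico (τ - 1) (τ - 1 + ℓ))) + 0 := by
        gcongr
        · exact measure_union_le _ _
        · simp
    _ ≤ ENNReal.ofReal ℓ + ENNReal.ofReal ℓ := by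
        rw [add_zero, Real.volume_Ico, Real.volume_Ico]
        simp

theorem fract_meas {m : ℕ} (j : Fin m) (τ ℓ : ℝ) :
    MeasurableSet {x : Fin m → ℝ | Int.fract (x j - τ) < ℓ} :=
  measurableSet_lt (measurable_fract.comp ((measurable_pi_apply j).sub measurable_const))
    measurable_const

theorem avg {m : ℕ} (C : Set (Fin m → ℝ)) (hC : MeasurableSet C) (j : Fin m)
    (ℓ : ℝ) (hl0 : 0 < ℓ) (hl1 : ℓ ≤ 1) :
    ∃ τ : ℝ, ENNReal.ofReal ℓ * cubeMeasure m C
      ≤ 2 * cubeMeasure m (C ∩ {x | Int.fract (x j - τ) < ℓ}) := by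
  by_contra hcon
  push_neg at hcon
  set μ := cubeMeasure m with hμ
  set ν := volume.restrict (Set.Icc (0:ℝ) 1) with hν
  haveI : IsProbabilityMeasure ν := ⟨by simp [hν, Real.volume_Icc]⟩
  set c := ENNReal.ofReal ℓ * μ C with hc
  have hcfin : c ≠ ⊤ := by
    apply ENNReal.mul_ne_top ENNReal.ofReal_ne_top (measure_ne_top μ C)
  set T : Set ((Fin m → ℝ) × ℝ) := {q | q.1 ∈ C ∧ Int.fract (q.1 j - q.2) < ℓ} with hT
  have hTmeas : MeasurableSet T := by
    have h1 : T = (Prod.fst ⁻¹' C) ∩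
        ((fun q : (Fin m → ℝ) × ℝ => Int.fract (q.1 j - q.2)) ⁻¹' Set.Iio ℓ) := rfl
    rw [h1]
    exact (measurable_fst hC).inter
      ((measurable_fract.comp
        (((measurable_pi_apply j).comp measurable_fst).sub measurable_snd))
        measurableSet_Iio)
  -- lower bound for the double integral
  have key : c ≤ (μ.prod ν) T := by
    rw [Measure.prod_apply hTmeas]
    have hpt : ∀ x : Fin m → ℝ,
        Set.indicator C (fun _ => ENNReal.ofReal ℓ) x ≤ ν (Prod.mk x ⁻¹' T) := by
      intro x
      by_cases hx : x ∈ C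
      · rw [Set.indicator_of_mem hx]
        have h2 : Prod.mk x ⁻¹' T = {τ : ℝ | Int.fract (x j - τ) < ℓ} := by
          ext τ; simp [hT, hx]
        have hmS : MeasurableSet {τ : ℝ | Int.fract (x j - τ) < ℓ} := by
          apply measurableSet_lt _ measurable_const
          exact measurable_fract.comp (measurable_const.sub measurable_id)
        rw [h2, hν, Measure.restrict_apply hmS]
        exact tauLower (x j) ℓ hl0 hl1
      · rw [Set.indicator_of_notMem hx]; exact zero_le
    calc c = ∫⁻ x, Set.indicator C (fun _ => ENNReal.ofReal ℓ) x ∂μ := by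
          rw [lintegral_indicator_const hC, hc, mul_comm]
      _ ≤ _ := lintegral_mono hpt
  -- upper bound
  have key2 : (μ.prod ν) T ≤ c / 2 := by
    rw [Measure.prod_apply_symm hTmeas]
    have hpt : ∀ τ : ℝ, μ ((fun x => (x, τ)) ⁻¹' T) ≤ c / 2 := by
      intro τ
      have h2 : ((fun x : Fin m → ℝ => (x, τ)) ⁻¹' T)
          = C ∩ {x | Int.fract (x j - τ) < ℓ} := rfl
      rw [h2]
      have := (hcon τ).le
      rw [ENNReal.le_div_iff_mul_le (Or.inl two_ne_zero) (Or.inl ENNReal.ofNat_ne_top), mul_comm]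
      exact this
    calc ∫⁻ τ, μ ((fun x => (x, τ)) ⁻¹' T) ∂ν ≤ ∫⁻ _, c / 2 ∂ν := lintegral_mono hpt
      _ = c / 2 := by rw [lintegral_const, measure_univ, mul_one]
  have hc0 : c ≠ 0 := by
    intro h0
    have := hcon 0
    rw [h0] at this
    exact (not_lt_of_ge zero_le) this
  have : c < c := lt_of_le_of_lt (key.trans key2) (ENNReal.half_lt_self hc0 hcfin)
  exact lt_irrefl c this

theorem transfer {n m : ℕ} (E : Fin n → Fin m → Prop) (A : Fin n → Set (Fin m → ℝ))
    (hA : Conforms E A) (i0 i1 : Fin n) (hne : i0 ≠ i1) (j : Fin m)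
    (hj0 : E i0 j) (hj1 : E i1 j) (ℓ : ℝ) (hl0 : 0 < ℓ) (hl1 : ℓ ≤ 1) :
    ∃ B : Fin n → Set (Fin m → ℝ), Conforms E B ∧
      (⋃ i, A i) ⊆ (⋃ i, B i) ∧
      (∀ i, i ≠ i0 → i ≠ i1 → B i = A i) ∧
      cubeMeasure m (B i0) ≤ cubeMeasure m (A i0) + (ENNReal.ofReal ℓ + ENNReal.ofReal ℓ) ∧
      ∃ X : ℝ≥0∞, cubeMeasure m (B i1) + X = cubeMeasure m (A i1) ∧
        ENNReal.ofReal ℓ * cubeMeasure m (A i1) ≤ 2 * X := by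
  obtain ⟨τ₀, hτ₀⟩ := avg (A i1) (hA.1 i1) j ℓ hl0 hl1
  set τ := Int.fract τ₀ with hτdef
  have hfr : ∀ v : ℝ, Int.fract (v - τ₀) = Int.fract (v - τ) := by
    intro v
    have h2 : v - τ₀ = (v - τ) - ((⌊τ₀⌋ : ℤ) : ℝ) := by
      have := Int.floor_add_fract τ₀
      rw [hτdef]; push_cast; linarith
    rw [h2, Int.fract_sub_intCast]
  have hsets : {x : Fin m → ℝ | Int.fract (x j - τ₀) < ℓ}
      = {x : Fin m → ℝ | Int.fract (x j - τ) < ℓ} := by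
    ext x; simp only [Set.mem_setOf_eq, hfr]
  rw [hsets] at hτ₀
  set R := {x : Fin m → ℝ | Int.fract (x j - τ) < ℓ} with hRdef
  have hRmeas : MeasurableSet R := fract_meas j τ ℓ
  have hRmeasure : cubeMeasure m R ≤ ENNReal.ofReal ℓ + ENNReal.ofReal ℓ := by
    have h1 : R = {x : Fin m → ℝ | x j ∈ {s : ℝ | Int.fract (s - τ) < ℓ}} := rfl
    have hSmeas : MeasurableSet {s : ℝ | Int.fract (s - τ) < ℓ} := by
      apply measurableSet_lt _ measurable_const
      exact measurable_fract.comp (measurable_id.sub measurable_const)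
    rw [h1, cube_slab m j _ hSmeas]
    exact sUpper τ ℓ (Int.fract_nonneg τ₀) (Int.fract_lt_one τ₀)
  set B : Fin n → Set (Fin m → ℝ) :=
    fun i => if i = i0 then A i0 ∪ R else if i = i1 then A i1 \ R else A i with hBdef
  have hB0 : B i0 = A i0 ∪ R := by simp [hBdef]
  have hB1 : B i1 = A i1 \ R := by simp [hBdef, hne.symm]
  have hBo : ∀ i, i ≠ i0 → i ≠ i1 → B i = A i := by
    intro i h1 h2; simp [hBdef, h1, h2]
  have hRdep : ∀ i : Fin n, E i j → DependsOnlyOn R {j' | E i j'} := by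
    intro i hij
    exact dep_slab j (fun v => Int.fract (v - τ) < ℓ) hij
  refine ⟨B, ⟨?_, ?_⟩, ?_, hBo, ?_, ?_⟩
  · intro i
    rcases eq_or_ne i i0 with rfl | h1
    · rw [hB0]; exact (hA.1 i).union hRmeas
    rcases eq_or_ne i i1 with rfl | h2
    · rw [hB1]; exact (hA.1 i).diff hRmeas
    · rw [hBo i h1 h2]; exact hA.1 i
  · intro i
    rcases eq_or_ne i i0 with rfl | h1
    · rw [hB0]; exact dep_union (hA.2 i) (hRdep i hj0)
    rcases eq_or_ne i i1 with rfl | h2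
    · rw [hB1]; exact dep_diff (hA.2 i) (hRdep i hj1)
    · rw [hBo i h1 h2]; exact hA.2 i
  · intro x hx
    rw [Set.mem_iUnion] at hx ⊢
    obtain ⟨k, hk⟩ := hx
    rcases eq_or_ne k i0 with rfl | h1
    · exact ⟨k, by rw [hB0]; exact Or.inl hk⟩
    rcases eq_or_ne k i1 with rfl | h2
    · by_cases hxR : x ∈ R
      · exact ⟨i0, by rw [hB0]; exact Or.inr hxR⟩
      · exact ⟨k, by rw [hB1]; exact ⟨hk, hxR⟩⟩
    · exact ⟨k, by rw [hBo k h1 h2]; exact hk⟩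
  · rw [hB0]
    calc cubeMeasure m (A i0 ∪ R) ≤ cubeMeasure m (A i0) + cubeMeasure m R :=
        measure_union_le _ _
      _ ≤ _ := by exact add_le_add_right hRmeasure _
  · refine ⟨cubeMeasure m (A i1 ∩ R), ?_, hτ₀⟩
    rw [hB1]
    exact measure_diff_add_inter (A i1) hRmeas

theorem cross {n m : ℕ} (E : Fin n → Fin m → Prop)
    (W : Finset (Fin n)) :
    ∀ (a b : Fin n), (baseGraph E).Walk a b → a ∈ W → b ∉ W →
      ∃ i0 ∈ W, ∃ i1, i1 ∉ W ∧ (baseGraph E).Adj i0 i1 := by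
  intro a b w
  induction w with
  | nil => intro ha hb; exact absurd ha hb
  | @cons u v _ h q ih =>
    intro ha hb
    by_cases hc : v ∈ W
    · exact ih hc hb
    · exact ⟨u, ha, v, hc, h⟩

theorem enlarge {m : ℕ} (S : Set (Fin m → ℝ)) (hS : MeasurableSet S) (j : Fin m)
    (t : ℝ) (ht0 : 0 ≤ t) (ht1 : t ≤ 1) (hle : cubeMeasure m S ≤ ENNReal.ofReal t) :
    ∃ S' : Set (Fin m → ℝ), S ⊆ S' ∧ MeasurableSet S' ∧
      (∀ T : Set (Fin m), j ∈ T → DependsOnlyOn S T → DependsOnlyOn S' T) ∧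
      cubeMeasure m S' = ENNReal.ofReal t := by
  set μ := cubeMeasure m with hμ
  have hslabmeas : ∀ r : ℝ, MeasurableSet {x : Fin m → ℝ | x j < r} := fun r =>
    measurableSet_lt (measurable_pi_apply j) measurable_const
  have hmeas : ∀ r : ℝ, MeasurableSet (S ∪ {x : Fin m → ℝ | x j < r}) := fun r =>
    hS.union (hslabmeas r)
  set f : ℝ → ℝ := fun r => (μ (S ∪ {x | x j < r})).toReal with hf
  have hmono : ∀ a b : ℝ, b ≤ a → f b ≤ f a := by
    intro a b hba
    apply ENNReal.toReal_mono (measure_ne_top μ _)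
    apply measure_mono
    apply Set.union_subset_union_right
    intro x hx; exact lt_of_lt_of_le hx hba
  have hlipb : ∀ a b : ℝ, b ≤ a → f a ≤ f b + (a - b) := by
    intro a b hba
    have hsub : S ∪ {x : Fin m → ℝ | x j < a}
        ⊆ (S ∪ {x | x j < b}) ∪ {x : Fin m → ℝ | x j ∈ Set.Ico b a} := by
      rintro x (hx | hx)
      · exact Or.inl (Or.inl hx)
      · rcases lt_or_ge (x j) b with h | h
        · exact Or.inl (Or.inr h)
        · exact Or.inr ⟨h, hx⟩
    have hico : μ {x : Fin m → ℝ | x j ∈ Set.Ico b a} ≤ ENNReal.ofReal (a - b) := by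
      rw [hμ, cube_slab m j _ measurableSet_Ico]
      calc volume (Set.Ico b a ∩ Set.Icc 0 1) ≤ volume (Set.Ico b a) :=
          measure_mono Set.inter_subset_left
        _ = ENNReal.ofReal (a - b) := Real.volume_Ico
    have h1 : μ (S ∪ {x | x j < a}) ≤ μ (S ∪ {x | x j < b}) + ENNReal.ofReal (a - b) :=
      le_trans (measure_mono hsub) (le_trans (measure_union_le _ _) (by gcongr))
    have h2 := ENNReal.toReal_mono
      (ENNReal.add_ne_top.mpr ⟨measure_ne_top μ _, ENNReal.ofReal_ne_top⟩) h1
    rw [ENNReal.toReal_add (measure_ne_top μ _) ENNReal.ofReal_ne_top,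
      ENNReal.toReal_ofReal (by linarith)] at h2
    exact h2
  have hlip : LipschitzWith 1 f := by
    apply LipschitzWith.of_dist_le_mul
    intro a b
    rw [NNReal.coe_one, one_mul, Real.dist_eq, Real.dist_eq]
    rcases le_total b a with h | h
    · rw [abs_of_nonneg (by linarith [hmono a b h]), abs_of_nonneg (by linarith)]
      linarith [hlipb a b h]
    · rw [abs_of_nonpos (by linarith [hmono b a h]), abs_of_nonpos (by linarith)]
      linarith [hlipb b a h]
  have hf0 : f 0 = (μ S).toReal := by
    have hnull : μ {x : Fin m → ℝ | x j < 0} = 0 := by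
      have h3 : {x : Fin m → ℝ | x j < 0} = {x : Fin m → ℝ | x j ∈ Set.Iio 0} := rfl
      rw [h3, hμ, cube_slab m j _ measurableSet_Iio]
      have h4 : Set.Iio (0:ℝ) ∩ Set.Icc 0 1 = ∅ := by
        ext x; simp only [Set.mem_inter_iff, Set.mem_Iio, Set.mem_Icc, Set.mem_empty_iff_false,
          iff_false, not_and]
        intro h1 h2 h3; linarith
      rw [h4]; simp
    show (μ (S ∪ {x | x j < 0})).toReal = (μ S).toReal
    have heq : μ (S ∪ {x | x j < 0}) = μ S :=
      le_antisymm (le_trans (measure_union_le _ _) (by rw [hnull, add_zero]))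
        (measure_mono Set.subset_union_left)
    rw [heq]
  have hf1 : f 1 = 1 := by
    show (μ (S ∪ {x | x j < 1})).toReal = 1
    have hge : (1:ℝ≥0∞) ≤ μ (S ∪ {x | x j < 1}) := by
      have h1 : μ {x : Fin m → ℝ | x j < 1} = 1 := by
        have : {x : Fin m → ℝ | x j < 1} = {x : Fin m → ℝ | x j ∈ Set.Iio 1} := rfl
        rw [this, hμ, cube_slab m j _ measurableSet_Iio]
        have : Set.Iio (1:ℝ) ∩ Set.Icc 0 1 = Set.Ico 0 1 := by
          ext x; simp only [Set.mem_inter_iff, Set.mem_Iio, Set.mem_Icc, Set.mem_Ico]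
          constructor
          · rintro ⟨h1, h2, h3⟩; exact ⟨h2, h1⟩
          · rintro ⟨h1, h2⟩; exact ⟨h2, h1, h2.le⟩
        rw [this, Real.volume_Ico]; simp
      calc (1:ℝ≥0∞) = μ {x : Fin m → ℝ | x j < 1} := h1.symm
        _ ≤ _ := measure_mono Set.subset_union_right
    have hle1 : μ (S ∪ {x | x j < 1}) ≤ 1 := prob_le_one
    have : μ (S ∪ {x | x j < 1}) = 1 := le_antisymm hle1 hge
    rw [this]; simp
  have hivt : t ∈ Set.Icc (f 0) (f 1) := by
    constructor
    · rw [hf0]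
      exact ENNReal.toReal_le_of_le_ofReal ht0 hle
    · rw [hf1]; exact ht1
  have := intermediate_value_Icc (by norm_num : (0:ℝ) ≤ 1) hlip.continuous.continuousOn
  obtain ⟨r, _, hfr⟩ := this hivt
  refine ⟨S ∪ {x | x j < r}, Set.subset_union_left, hmeas r, ?_, ?_⟩
  · intro T hjT hdep
    exact dep_union hdep (dep_slab j (fun v => v < r) hjT)
  · rw [← hfr, hf, ENNReal.ofReal_toReal (measure_ne_top μ _)]

theorem half_le {y : ℝ} {Z : ℝ≥0∞} (h : ENNReal.ofReal y ≤ 2 * Z) :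
    ENNReal.ofReal (y / 2) ≤ Z := by
  have h2 : (2:ℝ≥0∞) * ENNReal.ofReal (y/2) ≤ 2 * Z := by
    calc (2:ℝ≥0∞) * ENNReal.ofReal (y/2) = ENNReal.ofReal 2 * ENNReal.ofReal (y/2) := by
          norm_num
      _ = ENNReal.ofReal (2 * (y/2)) := (ENNReal.ofReal_mul (by norm_num)).symm
      _ = ENNReal.ofReal y := by congr 1; ring
      _ ≤ 2 * Z := h
  exact (ENNReal.mul_le_mul_iff_right two_ne_zero ENNReal.ofNat_ne_top).mp h2

theorem spread {n m : ℕ} (E : Fin n → Fin m → Prop) (hconn : (baseGraph E).Connected)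
    (p : Fin n → ℝ) (q : ℝ) (hq0 : 0 < q) (hq : ∀ i, q ≤ p i) (hp1 : ∀ i, p i ≤ 1) :
    ∀ (k : ℕ) (W : Finset (Fin n)) (α : ℝ), (Finset.univ \ W).card ≤ k →
      0 < α → α ≤ 1 →
      (∃ A, Conforms E A ∧ cubeMeasure m (⋃ i, A i) = 1 ∧
        (∀ i, cubeMeasure m (A i) ≤ ENNReal.ofReal (p i)) ∧
        (∀ i ∈ W, cubeMeasure m (A i) + ENNReal.ofReal α ≤ ENNReal.ofReal (p i))) →
      W.Nonempty →
      ∃ α' : ℝ, 0 < α' ∧ α' ≤ 1 ∧ ∃ B, Conforms E B ∧ cubeMeasure m (⋃ i, B i) = 1 ∧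
        (∀ i, cubeMeasure m (B i) + ENNReal.ofReal α' ≤ ENNReal.ofReal (p i)) := by
  intro k
  induction k with
  | zero =>
    intro W α hcard hα0 hα1 hinv hW
    obtain ⟨A, hconf, hun, hglob, hslack⟩ := hinv
    have hWuniv : ∀ i : Fin n, i ∈ W := by
      intro i
      by_contra hi
      have h1 : i ∈ Finset.univ \ W := Finset.mem_sdiff.mpr ⟨Finset.mem_univ i, hi⟩
      have h2 := Finset.card_pos.mpr ⟨i, h1⟩
      omega
    exact ⟨α, hα0, hα1, A, hconf, hun, fun i => hslack i (hWuniv i)⟩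
  | succ k ih =>
    intro W α hcard hα0 hα1 hinv hW
    obtain ⟨A, hconf, hun, hglob, hslack⟩ := hinv
    by_cases huniv : ∀ i : Fin n, i ∈ W
    · exact ⟨α, hα0, hα1, A, hconf, hun, fun i => hslack i (huniv i)⟩
    push_neg at huniv
    obtain ⟨b, hb⟩ := huniv
    obtain ⟨a, ha⟩ := hW
    obtain ⟨wk⟩ := hconn a b
    obtain ⟨i0, hi0W, i1, hi1W, hadj⟩ := cross E W a b wk ha hb
    obtain ⟨hne01, j, hj0, hj1⟩ := hadj
    have hq1 : q ≤ 1 := (hq i0).trans (hp1 i0)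
    set ℓ := α / 4 with hℓ
    have hℓ0 : 0 < ℓ := by rw [hℓ]; positivity
    have hℓ1 : ℓ ≤ 1 := by rw [hℓ]; linarith
    obtain ⟨B, hBconf, hBsub, hBother, hB0, X, hX, hXlb⟩ :=
      transfer E A hconf i0 i1 hne01 j hj0 hj1 ℓ hℓ0 hℓ1
    set α' := α * (q / 16) with hα'
    have hα'0 : 0 < α' := by rw [hα']; positivity
    have hα'1 : α' ≤ 1 := by nlinarith
    have hα'le : α' ≤ α := by nlinarith
    -- card decreases
    have hcard' : (Finset.univ \ insert i1 W).card ≤ k := by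
      rw [Finset.sdiff_insert]
      have hmem : i1 ∈ Finset.univ \ W := Finset.mem_sdiff.mpr ⟨Finset.mem_univ i1, hi1W⟩
      rw [Finset.card_erase_of_mem hmem]
      have := Finset.card_pos.mpr ⟨i1, hmem⟩
      omega
    -- union full
    have hBun : cubeMeasure m (⋃ i, B i) = 1 :=
      le_antisymm prob_le_one (hun ▸ measure_mono hBsub)
    -- slack at i0
    have hofadd : ENNReal.ofReal ℓ + ENNReal.ofReal ℓ + ENNReal.ofReal α' ≤ ENNReal.ofReal α := by
      rw [← ENNReal.ofReal_add (by positivity) (by positivity),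
        ← ENNReal.ofReal_add (by positivity) (by positivity)]
      apply ENNReal.ofReal_le_ofReal
      rw [hℓ, hα']
      nlinarith
    have b0 : cubeMeasure m (B i0) + ENNReal.ofReal α' ≤ ENNReal.ofReal (p i0) := by
      calc cubeMeasure m (B i0) + ENNReal.ofReal α'
          ≤ (cubeMeasure m (A i0) + (ENNReal.ofReal ℓ + ENNReal.ofReal ℓ)) + ENNReal.ofReal α' := by
            gcongr
        _ = cubeMeasure m (A i0) + (ENNReal.ofReal ℓ + ENNReal.ofReal ℓ + ENNReal.ofReal α') := by
            ring
        _ ≤ cubeMeasure m (A i0) + ENNReal.ofReal α := by gcongr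
        _ ≤ ENNReal.ofReal (p i0) := hslack i0 hi0W
    -- slack at i1
    have hBle1 : cubeMeasure m (B i1) ≤ cubeMeasure m (A i1) := by
      rw [← hX]; exact self_le_add_right _ _
    have b1 : cubeMeasure m (B i1) + ENNReal.ofReal α' ≤ ENNReal.ofReal (p i1) := by
      rcases le_total (cubeMeasure m (A i1)) (ENNReal.ofReal (p i1 / 2)) with hcase | hcase
      · have h1 : ENNReal.ofReal α' ≤ ENNReal.ofReal (p i1 / 2) := by
          apply ENNReal.ofReal_le_ofReal
          rw [hα']
          nlinarith [hq i1, hq0.le, hα1, hα0.le]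
        calc cubeMeasure m (B i1) + ENNReal.ofReal α'
            ≤ ENNReal.ofReal (p i1 / 2) + ENNReal.ofReal (p i1 / 2) :=
              add_le_add (hBle1.trans hcase) h1
          _ = ENNReal.ofReal (p i1) := by
              rw [← ENNReal.ofReal_add (by linarith [hq i1, hq0]) (by linarith [hq i1, hq0])]
              congr 1; ring
      · have h2 : ENNReal.ofReal (ℓ * (p i1 / 2)) ≤ 2 * X := by
          calc ENNReal.ofReal (ℓ * (p i1 / 2))
              = ENNReal.ofReal ℓ * ENNReal.ofReal (p i1 / 2) := ENNReal.ofReal_mul hℓ0.le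
            _ ≤ ENNReal.ofReal ℓ * cubeMeasure m (A i1) := by gcongr
            _ ≤ 2 * X := hXlb
        have h3 : ENNReal.ofReal (ℓ * (p i1 / 2) / 2) ≤ X := half_le h2
        have h4 : ENNReal.ofReal α' ≤ X := by
          refine le_trans (ENNReal.ofReal_le_ofReal ?_) h3
          rw [hα', hℓ]
          nlinarith [hq i1, hq0.le, hα1, hα0.le]
        calc cubeMeasure m (B i1) + ENNReal.ofReal α'
            ≤ cubeMeasure m (B i1) + X := by gcongr
          _ = cubeMeasure m (A i1) := hX
          _ ≤ ENNReal.ofReal (p i1) := hglob i1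
    -- global bound
    have hBglob : ∀ i, cubeMeasure m (B i) ≤ ENNReal.ofReal (p i) := by
      intro i
      rcases eq_or_ne i i0 with rfl | h1
      · exact le_trans (self_le_add_right _ _) b0
      rcases eq_or_ne i i1 with rfl | h2
      · exact hBle1.trans (hglob i)
      · rw [hBother i h1 h2]; exact hglob i
    -- slack on insert i1 W
    have hBslack : ∀ i ∈ insert i1 W,
        cubeMeasure m (B i) + ENNReal.ofReal α' ≤ ENNReal.ofReal (p i) := by
      intro i hi
      rcases Finset.mem_insert.mp hi with rfl | hiW
      · exact b1
      rcases eq_or_ne i i0 with rfl | h1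
      · exact b0
      · have h2 : i ≠ i1 := fun h => hi1W (h ▸ hiW)
        rw [hBother i h1 h2]
        calc cubeMeasure m (A i) + ENNReal.ofReal α'
            ≤ cubeMeasure m (A i) + ENNReal.ofReal α := by
              gcongr
          _ ≤ ENNReal.ofReal (p i) := hslack i hiW
    exact ih (insert i1 W) α' hcard' hα'0 hα'1
      ⟨B, hBconf, hBun, hBglob, hBslack⟩ ⟨i1, Finset.mem_insert_self _ _⟩

theorem stmt4 {n m : ℕ} (E : Fin n → Fin m → Prop)
    (hconn : (baseGraph E).Connected) (p : Fin n → ℝ)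
    (hp : ∀ i, 0 < p i ∧ p i ≤ 1) (hbd : OnBoundary E p)
    (A : Fin n → Set (Fin m → ℝ)) (hA : Conforms E A)
    (hle : ∀ i, cubeMeasure m (A i) ≤ ENNReal.ofReal (p i))
    (hfull : cubeMeasure m (⋃ i, A i) = 1) :
    ∀ i, cubeMeasure m (A i) = ENNReal.ofReal (p i) := by
  intro i
  by_cases hone : ∀ k : Fin n, k = i
  · -- single-vertex case
    have hU : (⋃ k, A k) = A i := by
      ext x
      simp only [Set.mem_iUnion]
      constructor
      · rintro ⟨k, hk⟩; rw [← hone k]; exact hk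
      · intro hx; exact ⟨i, hx⟩
    have h1 : cubeMeasure m (A i) = 1 := by rw [← hU]; exact hfull
    have h2 : ENNReal.ofReal (p i) ≤ 1 := ENNReal.ofReal_le_one.mpr (hp i).2
    rw [h1]
    exact le_antisymm (h1 ▸ hle i) h2
  · push_neg at hone
    obtain ⟨k0, hk0⟩ := hone
    -- every vertex has an incident edge
    have hedge : ∀ v : Fin n, ∃ j, E v j := by
      intro v
      have hex : ∃ w : Fin n, w ≠ v := by
        rcases eq_or_ne v i with rfl | hv
        · exact ⟨k0, hk0⟩
        · exact ⟨i, fun h => hv h.symm⟩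
      obtain ⟨w, hw⟩ := hex
      obtain ⟨wk⟩ := hconn v w
      cases wk with
      | nil => exact absurd rfl hw
      | cons h q =>
        obtain ⟨-, j, hj, -⟩ := h
        exact ⟨j, hj⟩
    by_contra hne
    have hlt : cubeMeasure m (A i) < ENNReal.ofReal (p i) := (hle i).lt_of_ne hne
    set a := (cubeMeasure m (A i)).toReal with ha
    have hfinA : cubeMeasure m (A i) ≠ ⊤ := measure_ne_top _ _
    have halt : a < p i := ENNReal.toReal_lt_of_lt_ofReal hlt
    set δ := p i - a with hδdef
    have hδ0 : 0 < δ := by rw [hδdef]; linarith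
    have hδ1 : δ ≤ 1 := by
      have : 0 ≤ a := ENNReal.toReal_nonneg
      have := (hp i).2
      rw [hδdef]; linarith
    -- min of p
    obtain ⟨imin, -, hmin⟩ := Finset.exists_min_image Finset.univ p ⟨i, Finset.mem_univ i⟩
    set q := p imin with hqdef
    have hq0 : 0 < q := (hp imin).1
    have hqle : ∀ v, q ≤ p v := fun v => hmin v (Finset.mem_univ v)
    -- initial invariant on {i}
    have hinv0 : cubeMeasure m (A i) + ENNReal.ofReal δ ≤ ENNReal.ofReal (p i) := by
      have h1 : cubeMeasure m (A i) = ENNReal.ofReal a := (ENNReal.ofReal_toReal hfinA).symm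
      rw [h1, ← ENNReal.ofReal_add ENNReal.toReal_nonneg hδ0.le]
      apply le_of_eq
      congr 1
      rw [hδdef]; ring
    obtain ⟨α', hα'0, hα'1, B, hBconf, hBun, hBslack⟩ :=
      spread E hconn p q hq0 hqle (fun v => (hp v).2) n {i} δ
        (by
          calc (Finset.univ \ {i}).card ≤ Finset.univ.card := Finset.card_le_card
                (Finset.sdiff_subset)
            _ = n := by rw [Finset.card_univ, Fintype.card_fin])
        hδ0 hδ1
        ⟨A, hA, hfull, hle, by
          intro v hv
          rw [Finset.mem_singleton] at hv
          subst hv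
          exact hinv0⟩
        ⟨i, Finset.mem_singleton_self i⟩
    set ε := α' / 2 with hεdef
    have hε : ε ∈ Set.Ioo (0:ℝ) 1 := ⟨by positivity, by rw [hεdef]; linarith⟩
    obtain ⟨hfirst, -⟩ := hbd ε hε
    -- enlarge each B v to measure (1-ε) p v
    have hkey : ∀ v : Fin n, ∃ S' : Set (Fin m → ℝ), B v ⊆ S' ∧ MeasurableSet S' ∧
        DependsOnlyOn S' {j | E v j} ∧
        cubeMeasure m S' = ENNReal.ofReal ((1 - ε) * p v) := by
      intro v
      obtain ⟨j, hj⟩ := hedge v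
      have hαp : α' ≤ p v := by
        have h1 : ENNReal.ofReal α' ≤ ENNReal.ofReal (p v) :=
          le_trans (self_le_add_left _ _) (hBslack v)
        exact (ENNReal.ofReal_le_ofReal_iff (hp v).1.le).mp h1
      have hBv : cubeMeasure m (B v) ≤ ENNReal.ofReal ((1 - ε) * p v) := by
        have h1 : ENNReal.ofReal (p v) = ENNReal.ofReal (p v - α') + ENNReal.ofReal α' := by
          rw [← ENNReal.ofReal_add (by linarith) hα'0.le]
          congr 1; ring
        have h2 : cubeMeasure m (B v) + ENNReal.ofReal α'
            ≤ ENNReal.ofReal (p v - α') + ENNReal.ofReal α' := by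
          rw [← h1]; exact hBslack v
        have h3 : cubeMeasure m (B v) ≤ ENNReal.ofReal (p v - α') :=
          (ENNReal.add_le_add_iff_right ENNReal.ofReal_ne_top).mp h2
        refine h3.trans (ENNReal.ofReal_le_ofReal ?_)
        have hpv1 : p v ≤ 1 := (hp v).2
        rw [hεdef]
        nlinarith [hα'0.le]
      have ht0 : 0 ≤ (1 - ε) * p v := by
        have := hε.2
        nlinarith [(hp v).1.le, hε.1.le]
      have ht1 : (1 - ε) * p v ≤ 1 := by
        nlinarith [(hp v).1.le, (hp v).2, hε.1.le, hε.2]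
      obtain ⟨S', hsub, hmeas, hdep, hval⟩ :=
        enlarge (B v) (hBconf.1 v) j ((1 - ε) * p v) ht0 ht1 hBv
      exact ⟨S', hsub, hmeas, hdep _ hj (hBconf.2 v), hval⟩
    choose C hCsub hCmeas hCdep hCval using hkey
    have hCfull : (1:ℝ≥0∞) ≤ cubeMeasure m (⋃ v, C v) := by
      rw [← hBun]
      exact measure_mono (Set.iUnion_mono hCsub)
    have := hfirst C ⟨hCmeas, hCdep⟩ hCval
    exact absurd this (not_lt_of_ge hCfull)
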